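/- arXiv:1904.12209 — 4 statements merged into one kernel-verified Lean document; each statement's English description precedes it below -/
import Mathlib

section
/- For every N ≥ 1, the sandpile group G_{Γ_N} on an N×N square domain Γ_N ⊂ ℤ² contains a cyclic subgroup whose order is the product of all distinct prime factors of N+1 (the radical of N+1). -/
/-- Two vertices of `ℤ²` are adjacent iff their Euclidean distance is `1`. -/
def adj (u v : ℤ × ℤ) : Prop := (u.1 - v.1) ^ 2 + (u.2 - v.2) ^ 2 = 1

instance : DecidableRel adj := fun u v => by unfold adj; infer_instance

/-- The reduced Laplacian of a finite domain `Γ ⊂ ℤ²`. -/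
def lap {R : Type*} [CommRing R] (Γ : Finset (ℤ × ℤ)) (f : ↥Γ → R) : ↥Γ → R :=
  fun v => (∑ w ∈ Γ.attach.filter (fun w => adj w.1 v.1), f w) - 4 * f v

lemma lap_add {R : Type*} [CommRing R] (Γ : Finset (ℤ × ℤ)) (f g : ↥Γ → R) :
    lap Γ (f + g) = lap Γ f + lap Γ g := by
  funext v; simp [lap, Finset.sum_add_distrib]; ring

lemma lap_neg {R : Type*} [CommRing R] (Γ : Finset (ℤ × ℤ)) (f : ↥Γ → R) :
    lap Γ (-f) = -(lap Γ f) := by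
  funext v; simp [lap]; ring

lemma lap_smul {R : Type*} [CommRing R] (Γ : Finset (ℤ × ℤ)) (c : R) (f : ↥Γ → R) :
    lap Γ (c • f) = c • lap Γ f := by
  funext v
  simp only [lap, Pi.smul_apply, smul_eq_mul, mul_sub, Finset.mul_sum]
  ring

lemma lap_zero {R : Type*} [CommRing R] (Γ : Finset (ℤ × ℤ)) :
    lap Γ (0 : ↥Γ → R) = 0 := by
  funext v; simp [lap]

/-- The boundary `∂Γ`: vertices of `Γ` adjacent to some vertex of `ℤ² \ Γ`. -/
noncomputable def boundary (Γ : Finset (ℤ × ℤ)) : Finset (ℤ × ℤ) :=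
  @Finset.filter _ (fun v => ∃ w : ℤ × ℤ, w ∉ Γ ∧ adj w v) (Classical.decPred _) Γ

lemma boundary_subset (Γ : Finset (ℤ × ℤ)) : boundary Γ ⊆ Γ :=
  @Finset.filter_subset _ (fun v => ∃ w : ℤ × ℤ, w ∉ Γ ∧ adj w v) (Classical.decPred _) Γ

/-- A function on `Γ` is harmonic if its Laplacian vanishes on the interior `Γ \ ∂Γ`. -/
def Harmonic {R : Type*} [CommRing R] (Γ : Finset (ℤ × ℤ)) (f : ↥Γ → R) : Prop :=
  ∀ v : ↥Γ, (v : ℤ × ℤ) ∉ boundary Γ → lap Γ f v = 0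

/-- `Γ ⊂ ℤ²` is a convex domain if it is the set of lattice points of a
convex open subset of `ℝ²`. -/
def IsConvexDomain (Γ : Finset (ℤ × ℤ)) : Prop :=
  ∃ P : Set (ℝ × ℝ), Convex ℝ P ∧ IsOpen P ∧
    ∀ v : ℤ × ℤ, v ∈ Γ ↔ ((v.1 : ℝ), (v.2 : ℝ)) ∈ P

/-- The reduced Laplacian as an additive group homomorphism on `ℤ^Γ`. -/
def lapHom (Γ : Finset (ℤ × ℤ)) : (↥Γ → ℤ) →+ (↥Γ → ℤ) where
  toFun := lap Γ
  map_zero' := lap_zero Γ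
  map_add' := lap_add Γ

/-- The sandpile group `G_Γ = ℤ^Γ / Δ_Γ(ℤ^Γ)`. -/
def SandpileGroup (Γ : Finset (ℤ × ℤ)) : Type :=
  (↥Γ → ℤ) ⧸ (lapHom Γ).range

instance (Γ : Finset (ℤ × ℤ)) : AddCommGroup (SandpileGroup Γ) :=
  inferInstanceAs (AddCommGroup ((↥Γ → ℤ) ⧸ (lapHom Γ).range))

/-- The canonical projection `ℤ^Γ → G_Γ`. -/
def sandMk (Γ : Finset (ℤ × ℤ)) : (↥Γ → ℤ) →+ SandpileGroup Γ :=
  QuotientAddGroup.mk' _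

/-- The `N×N` square domain `Γ_N = {1, …, N} × {1, …, N} ⊂ ℤ²`. -/
noncomputable def squareDomain (N : ℕ) : Finset (ℤ × ℤ) :=
  Finset.Icc 1 (N : ℤ) ×ˢ Finset.Icc 1 (N : ℤ)


lemma adj_iff {w v : ℤ × ℤ} : adj w v ↔
    w = (v.1 + 1, v.2) ∨ w = (v.1 - 1, v.2) ∨ w = (v.1, v.2 + 1) ∨ w = (v.1, v.2 - 1) := by
  unfold adj
  obtain ⟨a, b⟩ := w; obtain ⟨c, d⟩ := v
  simp only [Prod.mk.injEq]
  constructor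
  · intro h
    have h3 : -1 ≤ a - c := by nlinarith [sq_nonneg (a-c+1), sq_nonneg (b-d)]
    have h3' : a - c ≤ 1 := by nlinarith [sq_nonneg (a-c-1), sq_nonneg (b-d)]
    have h4 : -1 ≤ b - d := by nlinarith [sq_nonneg (b-d+1), sq_nonneg (a-c)]
    have h4' : b - d ≤ 1 := by nlinarith [sq_nonneg (b-d-1), sq_nonneg (a-c)]
    have hc : (a - c = -1 ∨ a - c = 0 ∨ a - c = 1) := by omega
    have hd : (b - d = -1 ∨ b - d = 0 ∨ b - d = 1) := by omega
    rcases hc with h'|h'|h' <;> rcases hd with h''|h''|h'' <;>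
      rw [h', h''] at h <;> omega
  · rintro (⟨rfl, rfl⟩|⟨rfl, rfl⟩|⟨rfl, rfl⟩|⟨rfl, rfl⟩) <;> ring

lemma adj_comm {w v : ℤ × ℤ} : adj w v ↔ adj v w := by
  unfold adj; constructor <;> intro h <;> linear_combination h

def nbr (Γ : Finset (ℤ × ℤ)) (v : ↥Γ) : Finset ↥Γ := Γ.attach.filter (fun w => adj w.1 v.1)

lemma mem_sq {N : ℕ} {v : ℤ × ℤ} : v ∈ squareDomain N ↔
    1 ≤ v.1 ∧ v.1 ≤ (N : ℤ) ∧ 1 ≤ v.2 ∧ v.2 ≤ (N : ℤ) := by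
  simp [squareDomain, Finset.mem_product, Finset.mem_Icc]; tauto

lemma card_nbr_le (Γ : Finset (ℤ × ℤ)) (v : ↥Γ) : (nbr Γ v).card ≤ 4 := by
  classical
  set T : Finset (ℤ × ℤ) :=
    {(v.1.1+1, v.1.2), (v.1.1-1, v.1.2), (v.1.1, v.1.2+1), (v.1.1, v.1.2-1)} with hT
  have hsub : (nbr Γ v).image Subtype.val ⊆ T := by
    intro u hu
    simp only [Finset.mem_image] at hu
    obtain ⟨w, hw, rfl⟩ := hu
    have : adj w.1 v.1 := (Finset.mem_filter.mp hw).2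
    rw [adj_iff] at this
    simp only [hT, Finset.mem_insert, Finset.mem_singleton]
    tauto
  have h1 : (nbr Γ v).card = ((nbr Γ v).image Subtype.val).card :=
    (Finset.card_image_of_injective _ Subtype.val_injective).symm
  have h2 : T.card ≤ 4 := by
    apply le_trans (Finset.card_insert_le _ _)
    have := Finset.card_insert_le (v.1.1-1, v.1.2) ({(v.1.1, v.1.2+1), (v.1.1, v.1.2-1)} : Finset (ℤ×ℤ))
    have := Finset.card_insert_le (v.1.1, v.1.2+1) ({(v.1.1, v.1.2-1)} : Finset (ℤ×ℤ))
    simp only [Finset.card_singleton] at *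
    omega
  exact h1 ▸ le_trans (Finset.card_le_card hsub) h2


lemma corner_mem {N : ℕ} (hN : 1 ≤ N) : ((1,1) : ℤ × ℤ) ∈ squareDomain N := by
  rw [mem_sq]
  refine ⟨le_refl _, ?_, le_refl _, ?_⟩ <;> · show (1:ℤ) ≤ N; exact_mod_cast hN

lemma card_nbr_corner_le {N : ℕ} (hN : 1 ≤ N) :
    (nbr (squareDomain N) ⟨(1,1), corner_mem hN⟩).card ≤ 3 := by
  classical
  set v : ↥(squareDomain N) := ⟨(1,1), corner_mem hN⟩ with hv
  set T : Finset (ℤ × ℤ) := {((2:ℤ),(1:ℤ)), ((1:ℤ),(2:ℤ))} with hT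
  have hsub : (nbr (squareDomain N) v).image Subtype.val ⊆ T := by
    intro u hu
    simp only [Finset.mem_image] at hu
    obtain ⟨w, hw, rfl⟩ := hu
    have hadj : adj w.1 v.1 := (Finset.mem_filter.mp hw).2
    have hmem : w.1 ∈ squareDomain N := w.2
    rw [mem_sq] at hmem
    rw [adj_iff] at hadj
    rcases hadj with h|h|h|h <;> rw [h] at hmem ⊢ <;>
      simp only [hv, Finset.mem_insert, Finset.mem_singleton, Prod.mk.injEq, hT] at hmem ⊢ <;>
      first
      | omega
      | norm_num
  have h1 : (nbr (squareDomain N) v).card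
      = ((nbr (squareDomain N) v).image Subtype.val).card :=
    (Finset.card_image_of_injective _ Subtype.val_injective).symm
  have h2 : T.card ≤ 2 := le_trans (Finset.card_insert_le _ _) (by simp)
  have h3 := le_trans (Finset.card_le_card hsub) h2
  omega

section Energy
variable (Γ : Finset (ℤ × ℤ))

lemma sum_if_sq (f : ↥Γ → ℤ) :
    ∑ v ∈ Γ.attach, ∑ w ∈ Γ.attach, (if adj w.1 v.1 then (f w)^2 else 0)
      = ∑ v ∈ Γ.attach, ((nbr Γ v).card : ℤ) * (f v)^2 := by
  rw [Finset.sum_comm]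
  refine Finset.sum_congr rfl fun w _ => ?_
  have h1 : ∑ v ∈ Γ.attach, (if adj w.1 v.1 then (f w)^2 else 0)
      = ∑ v ∈ Γ.attach.filter (fun v => adj w.1 v.1), (f w)^2 := (Finset.sum_filter _ _).symm
  rw [h1]
  have h2 : Γ.attach.filter (fun v => adj w.1 v.1) = nbr Γ w := by
    unfold nbr; apply Finset.filter_congr; intro v _; simp [adj_comm]
  rw [h2, Finset.sum_const, nsmul_eq_mul]

lemma lap_eq' {R : Type*} [CommRing R] (f : ↥Γ → R) (v : ↥Γ) :
    lap Γ f v = (∑ w ∈ nbr Γ v, f w) - 4 * f v := rfl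

lemma energy (f : ↥Γ → ℤ) :
    ∑ v ∈ Γ.attach, ∑ w ∈ Γ.attach, (if adj w.1 v.1 then (f v - f w)^2 else 0)
    + ∑ v ∈ Γ.attach, 2 * (4 - ((nbr Γ v).card : ℤ)) * (f v)^2
    = -2 * ∑ v ∈ Γ.attach, f v * lap Γ f v := by
  have expand : ∀ v w : ↥Γ, (if adj w.1 v.1 then (f v - f w)^2 else 0)
      = (if adj w.1 v.1 then (f v)^2 else 0) + (if adj w.1 v.1 then (f w)^2 else 0)
        - 2 * (if adj w.1 v.1 then f v * f w else 0) := by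
    intro v w; split <;> ring
  have e1 : ∀ v : ↥Γ, ∑ w ∈ Γ.attach, (if adj w.1 v.1 then (f v)^2 else 0)
      = ((nbr Γ v).card : ℤ) * (f v)^2 := by
    intro v
    rw [← Finset.sum_filter]
    show ∑ _w ∈ nbr Γ v, (f v)^2 = _
    rw [Finset.sum_const, nsmul_eq_mul]
  have e2 : ∀ v : ↥Γ, ∑ w ∈ Γ.attach, (if adj w.1 v.1 then f v * f w else 0)
      = f v * ∑ w ∈ nbr Γ v, f w := by
    intro v
    rw [← Finset.sum_filter, Finset.mul_sum]; rfl
  have split : ∑ v ∈ Γ.attach, ∑ w ∈ Γ.attach, (if adj w.1 v.1 then (f v - f w)^2 else 0)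
      = ∑ v ∈ Γ.attach, (((nbr Γ v).card : ℤ) * (f v)^2
        + (∑ w ∈ Γ.attach, (if adj w.1 v.1 then (f w)^2 else 0))
        - 2 * (f v * ∑ w ∈ nbr Γ v, f w)) := by
    refine Finset.sum_congr rfl fun v _ => ?_
    simp_rw [expand]
    rw [Finset.sum_sub_distrib, Finset.sum_add_distrib, e1 v, ← Finset.mul_sum, e2 v]
  rw [split]
  rw [Finset.sum_sub_distrib, Finset.sum_add_distrib, sum_if_sq Γ f]
  simp_rw [lap_eq' Γ f]
  set X := ∑ v ∈ Γ.attach, ((nbr Γ v).card : ℤ) * (f v)^2 with hX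
  have h1 : ∑ v ∈ Γ.attach, 2 * (f v * ∑ w ∈ nbr Γ v, f w)
      = 2 * ∑ v ∈ Γ.attach, f v * ∑ w ∈ nbr Γ v, f w := by rw [Finset.mul_sum]
  have h2 : ∑ v ∈ Γ.attach, f v * ((∑ w ∈ nbr Γ v, f w) - 4 * f v)
      = (∑ v ∈ Γ.attach, f v * ∑ w ∈ nbr Γ v, f w) - 4 * ∑ v ∈ Γ.attach, (f v)^2 := by
    rw [Finset.mul_sum, ← Finset.sum_sub_distrib]
    refine Finset.sum_congr rfl fun v _ => ?_; ring
  have h3 : ∑ v ∈ Γ.attach, 2 * (4 - ((nbr Γ v).card : ℤ)) * (f v)^2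
      = 8 * (∑ v ∈ Γ.attach, (f v)^2) - 2 * X := by
    rw [hX, Finset.mul_sum, Finset.mul_sum, ← Finset.sum_sub_distrib]
    refine Finset.sum_congr rfl fun v _ => ?_; ring
  rw [h1, h2, h3]
  ring

end Energy

lemma lap_sq_injective {N : ℕ} (hN : 1 ≤ N) (f : ↥(squareDomain N) → ℤ)
    (hf : lap (squareDomain N) f = 0) : f = 0 := by
  have hzero : ∀ v : ↥(squareDomain N), lap (squareDomain N) f v = 0 := by
    intro v; rw [hf]; rfl
  have hen := energy (squareDomain N) f
  have hRHS : -2 * ∑ v ∈ (squareDomain N).attach, f v * lap (squareDomain N) f v = 0 := by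
    simp [hzero]
  rw [hRHS] at hen
  have hwnn : ∀ v : ↥(squareDomain N), ∀ w ∈ (squareDomain N).attach,
      (0:ℤ) ≤ (if adj w.1 v.1 then (f v - f w)^2 else 0) := by
    intro v w _
    split
    · positivity
    · exact le_refl 0
  have h1nn : ∀ v ∈ (squareDomain N).attach, (0:ℤ) ≤ ∑ w ∈ (squareDomain N).attach, (if adj w.1 v.1 then (f v - f w)^2 else 0) := by
    intro v _
    exact Finset.sum_nonneg (hwnn v)
  have h2nn : ∀ v ∈ (squareDomain N).attach, (0:ℤ) ≤ 2 * (4 - ((nbr (squareDomain N) v).card : ℤ)) * (f v)^2 := by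
    intro v _
    have := card_nbr_le (squareDomain N) v
    have hc : (0:ℤ) ≤ 2 * (4 - ((nbr (squareDomain N) v).card : ℤ)) := by
      have : ((nbr (squareDomain N) v).card : ℤ) ≤ 4 := by exact_mod_cast this
      linarith
    exact mul_nonneg hc (sq_nonneg _)
  have hs1 : (0:ℤ) ≤ ∑ v ∈ (squareDomain N).attach, ∑ w ∈ (squareDomain N).attach, (if adj w.1 v.1 then (f v - f w)^2 else 0) :=
    Finset.sum_nonneg h1nn
  have hs2 : (0:ℤ) ≤ ∑ v ∈ (squareDomain N).attach, 2 * (4 - ((nbr (squareDomain N) v).card : ℤ)) * (f v)^2 :=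
    Finset.sum_nonneg h2nn
  have ht1 : ∑ v ∈ (squareDomain N).attach, ∑ w ∈ (squareDomain N).attach, (if adj w.1 v.1 then (f v - f w)^2 else 0) = 0 := by
    linarith
  have ht2 : ∑ v ∈ (squareDomain N).attach, 2 * (4 - ((nbr (squareDomain N) v).card : ℤ)) * (f v)^2 = 0 := by linarith
  -- pointwise consequences
  have hp2 : ∀ v : ↥(squareDomain N), 2 * (4 - ((nbr (squareDomain N) v).card : ℤ)) * (f v)^2 = 0 := by
    intro v
    have := (Finset.sum_eq_zero_iff_of_nonneg h2nn).mp ht2 v (Finset.mem_attach _ _)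
    exact this
  have hp1 : ∀ v w : ↥(squareDomain N), adj w.1 v.1 → f v = f w := by
    intro v w hadj
    have hv := (Finset.sum_eq_zero_iff_of_nonneg h1nn).mp ht1 v (Finset.mem_attach _ _)
    have := (Finset.sum_eq_zero_iff_of_nonneg (hwnn v)).mp hv w (Finset.mem_attach _ _)
    rw [if_pos hadj] at this
    have := sq_eq_zero_iff.mp this
    linarith
  -- corner is zero
  set v0 : ↥(squareDomain N) := ⟨(1,1), corner_mem hN⟩ with hv0
  have hcorner : f v0 = 0 := by
    have hd := card_nbr_corner_le hN
    have := hp2 v0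
    have hne : (2:ℤ) * (4 - ((nbr (squareDomain N) v0).card : ℤ)) ≠ 0 := by
      have : ((nbr (squareDomain N) v0).card : ℤ) ≤ 3 := by exact_mod_cast hd
      intro h; nlinarith
    have := mul_eq_zero.mp this
    rcases this with h|h
    · exact absurd h hne
    · exact pow_eq_zero_iff (by norm_num) |>.mp h
  -- propagate through F
  classical
  set F : ℤ × ℤ → ℤ := fun u => if h : u ∈ squareDomain N then f ⟨u, h⟩ else 0 with hF
  have stepF : ∀ a b : ℤ × ℤ, a ∈ squareDomain N → b ∈ squareDomain N → adj b a → F a = F b := by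
    intro a b ha hb hadj
    have := hp1 ⟨a, ha⟩ ⟨b, hb⟩ hadj
    simp only [hF, dif_pos ha, dif_pos hb]
    exact this
  have hF0 : F (1,1) = 0 := by
    simp only [hF, dif_pos (corner_mem hN : ((1,1):ℤ×ℤ) ∈ squareDomain N)]
    exact hcorner
  have memsq : ∀ a b : ℤ, 1 ≤ a → a ≤ (N:ℤ) → 1 ≤ b → b ≤ (N:ℤ) → ((a,b) : ℤ×ℤ) ∈ squareDomain N := by
    intro a b h1 h2 h3 h4; rw [mem_sq]; exact ⟨h1, h2, h3, h4⟩
  have col : ∀ y : ℤ, 1 ≤ y → y ≤ (N:ℤ) → F (1, y) = 0 := by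
    refine Int.le_induction ?_ ?_
    · intro _; exact hF0
    · intro y hy ih hyN
      have hyN' : y ≤ (N:ℤ) := by linarith
      have hadj : adj (1, y) (1, y + 1) := by unfold adj; ring
      have hstep := stepF (1, y+1) (1, y)
        (memsq _ _ le_rfl (by exact_mod_cast hN) (by linarith) hyN)
        (memsq _ _ le_rfl (by exact_mod_cast hN) hy hyN') hadj
      rw [hstep, ih hyN']
  have all : ∀ x : ℤ, 1 ≤ x → x ≤ (N:ℤ) → ∀ y : ℤ, 1 ≤ y → y ≤ (N:ℤ) → F (x, y) = 0 := by
    refine Int.le_induction ?_ ?_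
    · intro _ y hy1 hy2; exact col y hy1 hy2
    · intro x hx ih hxN y hy1 hy2
      have hxN' : x ≤ (N:ℤ) := by linarith
      have hadj : adj (x, y) (x + 1, y) := by unfold adj; ring
      have hstep := stepF (x+1, y) (x, y) (memsq _ _ (by linarith) hxN hy1 hy2)
        (memsq _ _ hx hxN' hy1 hy2) hadj
      rw [hstep, ih hxN' y hy1 hy2]
  funext v
  obtain ⟨⟨x, y⟩, hv⟩ := v
  have hb := mem_sq.mp (hv)
  have : F (x, y) = 0 := all x hb.1 hb.2.1 y hb.2.2.1 hb.2.2.2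
  simpa only [hF, dif_pos hv, Pi.zero_apply] using this

/-! ### Matrix representation and finiteness -/

def lapMat (Γ : Finset (ℤ × ℤ)) : Matrix ↥Γ ↥Γ ℤ :=
  fun v w => (if adj w.1 v.1 then 1 else 0) - 4 * (if v = w then 1 else 0)

lemma lapMat_mulVec (Γ : Finset (ℤ × ℤ)) (f : ↥Γ → ℤ) :
    (lapMat Γ).mulVec f = lap Γ f := by
  funext v
  have huniv : (Finset.univ : Finset ↥Γ) = Γ.attach := Finset.univ_eq_attach _
  show ∑ w, lapMat Γ v w * f w = _
  have : ∀ w : ↥Γ, lapMat Γ v w * f w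
      = (if adj w.1 v.1 then f w else 0) - 4 * (if v = w then f w else 0) := by
    intro w; unfold lapMat; split <;> split <;> ring
  simp_rw [this]
  rw [Finset.sum_sub_distrib, ← Finset.mul_sum, Finset.sum_ite_eq, huniv]
  rw [if_pos (Finset.mem_attach _ _)]
  rw [← Finset.sum_filter]
  rfl

lemma lapMat_det_ne_zero {N : ℕ} (hN : 1 ≤ N) : (lapMat (squareDomain N)).det ≠ 0 := by
  intro hdet
  obtain ⟨g, hg, hg0⟩ := Matrix.exists_mulVec_eq_zero_iff.mpr hdet
  apply hg
  rw [lapMat_mulVec] at hg0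
  exact lap_sq_injective hN g hg0

lemma smul_mem_lapRange {N : ℕ} (hN : 1 ≤ N) (h : ↥(squareDomain N) → ℤ) :
    (((lapMat (squareDomain N)).det.natAbs : ℤ)) • h ∈ (lapHom (squareDomain N)).range := by
  have key : ∀ u : ↥(squareDomain N) → ℤ,
      (lapMat (squareDomain N)).det • u ∈ (lapHom (squareDomain N)).range := by
    intro u
    refine ⟨(lapMat (squareDomain N)).adjugate.mulVec u, ?_⟩
    show lap (squareDomain N) _ = _
    rw [← lapMat_mulVec, Matrix.mulVec_mulVec, Matrix.mul_adjugate,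
      Matrix.smul_mulVec, Matrix.one_mulVec]
  rcases Int.natAbs_eq ((lapMat (squareDomain N)).det) with he | he
  · exact he ▸ key h
  · have h2 : (((lapMat (squareDomain N)).det.natAbs : ℤ)) • h
        = (lapMat (squareDomain N)).det • (-h) := by
      rw [smul_neg, ← neg_smul]
      congr 1
      omega
    rw [h2]; exact key (-h)

lemma sandpile_finite {N : ℕ} (hN : 1 ≤ N) : Finite (SandpileGroup (squareDomain N)) := by
  classical
  set Γ := squareDomain N
  set e : ℕ := (lapMat Γ).det.natAbs with he
  have he0 : e ≠ 0 := by
    simp only [he, Int.natAbs_ne_zero]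
    exact lapMat_det_ne_zero hN
  have hepos : 0 < e := Nat.pos_of_ne_zero he0
  refine Finite.of_surjective
    (fun a : ↥Γ → Fin e => sandMk Γ (fun v => ((a v : ℕ) : ℤ))) ?_
  intro x
  obtain ⟨g, rfl⟩ := QuotientAddGroup.mk'_surjective _ x
  have hE : ((e : ℤ)) ≠ 0 := by exact_mod_cast he0
  refine ⟨fun v => ⟨(g v % (e : ℤ)).toNat, ?_⟩, ?_⟩
  · have h1 : 0 ≤ g v % (e : ℤ) := Int.emod_nonneg _ hE
    have h2 : g v % (e : ℤ) < (e : ℤ) := Int.emod_lt_of_pos _ (by exact_mod_cast hepos)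
    omega
  · show sandMk Γ _ = sandMk Γ g
    have hdiff : g - (fun v => (((g v % (e:ℤ)).toNat : ℕ) : ℤ))
        = ((e : ℤ)) • (fun v => g v / (e : ℤ)) := by
      funext v
      have h1 : 0 ≤ g v % (e : ℤ) := Int.emod_nonneg _ hE
      have := Int.mul_ediv_add_emod (g v) (e : ℤ)
      simp only [Pi.sub_apply, Pi.smul_apply, smul_eq_mul]
      rw [Int.toNat_of_nonneg h1]
      omega
    have hmem : g - (fun v => (((g v % (e:ℤ)).toNat : ℕ) : ℤ)) ∈ (lapHom Γ).range := by
      rw [hdiff]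
      have := smul_mem_lapRange hN (fun v => g v / (e : ℤ))
      simpa [he] using this
    symm
    exact (QuotientAddGroup.eq_iff_sub_mem).mpr hmem

/-! ### The mod-p kernel vector and divisibility -/

lemma lap_cast (Γ : Finset (ℤ × ℤ)) (n : ℕ) (f : ↥Γ → ℤ) :
    lap Γ (fun v => ((f v : ZMod n))) = fun v => ((lap Γ f v : ℤ) : ZMod n) := by
  funext v
  simp only [lap]
  push_cast
  ring

lemma lap_prod_ker {N : ℕ} {p : ℕ} (hp : p.Prime) (hdvd : p ∣ N + 1) :
    lap (squareDomain N) (fun v : ↥(squareDomain N) => ((v.1.1 * v.1.2 : ℤ) : ZMod p)) = 0 := by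
  classical
  funext v
  obtain ⟨⟨x, y⟩, hv⟩ := v
  have hb := mem_sq.mp hv
  obtain ⟨hx1, hxN, hy1, hyN⟩ := hb
  set g : ℤ × ℤ → ZMod p := fun u => ((u.1 * u.2 : ℤ) : ZMod p) with hg
  -- the sum over neighbours inside Γ
  have hsum : (∑ w ∈ (squareDomain N).attach.filter
        (fun w => adj w.1 (⟨(x,y), hv⟩ : ↥(squareDomain N)).1), g w.1)
      = ∑ u ∈ (squareDomain N).filter (fun u => adj u (x,y)), g u := by
    rw [Finset.sum_filter, Finset.sum_attach (squareDomain N)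
      (fun u => if adj u (x,y) then g u else 0), ← Finset.sum_filter]
  have hzero_out : ∀ u : ℤ × ℤ, adj u (x, y) → u ∉ squareDomain N → g u = 0 := by
    intro u hadj hout
    rw [adj_iff] at hadj
    have hNp : ((N : ℤ) + 1 : ℤ) = ((N + 1 : ℕ) : ℤ) := by push_cast; ring
    have hcast : (((N : ℕ) + 1 : ℕ) : ZMod p) = 0 := by
      exact_mod_cast (ZMod.natCast_eq_zero_iff _ _).mpr hdvd
    have hx1' : 1 ≤ x := hx1
    have hxN' : x ≤ (N : ℤ) := hxN
    have hy1' : 1 ≤ y := hy1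
    have hyN' : y ≤ (N : ℤ) := hyN
    have hcast' : (((N + 1 : ℕ) : ℤ) : ZMod p) = 0 := by
      rw [Int.cast_natCast]; exact hcast
    rcases hadj with h|h|h|h <;> subst h <;> rw [mem_sq] at hout <;>
      simp only [not_and_or, not_le] at hout <;> simp only [hg]
    · have hxx : x = (N : ℤ) := by omega
      have h1 : ((x + 1) * y : ℤ) = ((N + 1 : ℕ) : ℤ) * y := by rw [hxx]; push_cast; ring
      rw [h1, Int.cast_mul, hcast', zero_mul]
    · have h1 : x - 1 = 0 := by omega
      rw [h1, zero_mul, Int.cast_zero]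
    · have hyy : y = (N : ℤ) := by omega
      have h1 : (x * (y + 1) : ℤ) = x * ((N + 1 : ℕ) : ℤ) := by rw [hyy]; push_cast; ring
      rw [h1, Int.cast_mul, hcast', mul_zero]
    · have h1 : y - 1 = 0 := by omega
      rw [h1, mul_zero, Int.cast_zero]
  -- replace the filtered sum by the sum over all four neighbours
  set nb : Finset (ℤ × ℤ) := {(x+1, y), (x-1, y), (x, y+1), (x, y-1)} with hnb
  have hfilter : (squareDomain N).filter (fun u => adj u (x,y))
      = nb.filter (fun u => u ∈ squareDomain N) := by
    ext u
    simp only [Finset.mem_filter, hnb, Finset.mem_insert, Finset.mem_singleton, adj_iff]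
    constructor
    · rintro ⟨h1, h2⟩; exact ⟨by simpa using h2, h1⟩
    · rintro ⟨h1, h2⟩; exact ⟨h2, by simpa using h1⟩
  have hfull : ∑ u ∈ nb.filter (fun u => u ∈ squareDomain N), g u = ∑ u ∈ nb, g u := by
    rw [Finset.sum_filter]
    refine Finset.sum_congr rfl fun u hu => ?_
    by_cases hin : u ∈ squareDomain N
    · rw [if_pos hin]
    · rw [if_neg hin]
      have hadj : adj u (x, y) := by
        rw [adj_iff]; simpa [hnb, Finset.mem_insert, Finset.mem_singleton] using hu
      exact (hzero_out u hadj hin).symm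
  have hnbsum : ∑ u ∈ nb, g u = g (x+1, y) + g (x-1, y) + g (x, y+1) + g (x, y-1) := by
    rw [hnb]
    have s1 : ((x+1, y) : ℤ×ℤ) ∉ ({(x-1, y), (x, y+1), (x, y-1)} : Finset (ℤ×ℤ)) := by
      simp only [Finset.mem_insert, Finset.mem_singleton, Prod.mk.injEq, and_true, true_and]
      omega
    have s2 : ((x-1, y) : ℤ×ℤ) ∉ ({(x, y+1), (x, y-1)} : Finset (ℤ×ℤ)) := by
      simp only [Finset.mem_insert, Finset.mem_singleton, Prod.mk.injEq, and_true, true_and]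
      omega
    have s3 : ((x, y+1) : ℤ×ℤ) ∉ ({(x, y-1)} : Finset (ℤ×ℤ)) := by
      simp only [Finset.mem_singleton, Prod.mk.injEq, and_true, true_and]
      omega
    rw [Finset.sum_insert s1, Finset.sum_insert s2, Finset.sum_insert s3,
      Finset.sum_singleton]
    ring
  show (∑ w ∈ (squareDomain N).attach.filter _, g w.1) - 4 * g (x, y) = 0
  rw [hsum, hfilter, hfull, hnbsum]
  simp only [hg]
  push_cast
  ring


/-! ### p divides the cardinality of the sandpile group -/

lemma prime_dvd_card {N : ℕ} (hN : 1 ≤ N) {p : ℕ} (hp : p.Prime) (hdvd : p ∣ N + 1) :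
    p ∣ Nat.card (SandpileGroup (squareDomain N)) := by
  classical
  haveI : Fact p.Prime := ⟨hp⟩
  haveI := sandpile_finite hN
  set Γ := squareDomain N
  -- the Laplacian over ZMod p, as a linear map
  set Lp : (↥Γ → ZMod p) →ₗ[ZMod p] (↥Γ → ZMod p) :=
    { toFun := lap Γ
      map_add' := lap_add Γ
      map_smul' := lap_smul Γ } with hLp
  have hker : ¬ Function.Injective Lp := by
    intro hinj
    have h1 : Lp (fun v : ↥Γ => ((v.1.1 * v.1.2 : ℤ) : ZMod p)) = Lp 0 := by
      show lap Γ _ = lap Γ 0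
      rw [lap_prod_ker hp hdvd, lap_zero]
    have h2 := hinj h1
    have h3 := congrFun h2 ⟨(1,1), corner_mem hN⟩
    simp only [Pi.zero_apply] at h3
    norm_num at h3
  have hnsurj : ¬ Function.Surjective Lp := by
    intro hsurj
    exact hker (LinearMap.injective_iff_surjective.mpr hsurj)
  -- the quotient over ZMod p
  set Lhom : (↥Γ → ZMod p) →+ (↥Γ → ZMod p) :=
    { toFun := lap Γ
      map_zero' := lap_zero Γ
      map_add' := lap_add Γ } with hLhom
  set Q := (↥Γ → ZMod p) ⧸ Lhom.range with hQ
  obtain ⟨u, hu⟩ := not_forall.mp hnsurj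
  have huQ : (QuotientAddGroup.mk' Lhom.range) u ≠ 0 := by
    intro h
    rw [QuotientAddGroup.mk'_apply, QuotientAddGroup.eq_zero_iff] at h
    obtain ⟨w, hw⟩ := h
    exact hu ⟨w, hw⟩
  -- surjective hom from the sandpile group onto Q
  set red : (↥Γ → ℤ) →+ (↥Γ → ZMod p) :=
    { toFun := fun f v => ((f v : ℤ) : ZMod p)
      map_zero' := by funext v; simp
      map_add' := by intro f g; funext v; simp } with hred
  set φ : (↥Γ → ℤ) →+ Q := (QuotientAddGroup.mk' Lhom.range).comp red with hφ
  have hφker : ∀ x ∈ (lapHom Γ).range, φ x = 0 := by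
    rintro x ⟨g, rfl⟩
    show (QuotientAddGroup.mk' Lhom.range) (red (lapHom Γ g)) = 0
    rw [QuotientAddGroup.mk'_apply, QuotientAddGroup.eq_zero_iff]
    refine ⟨fun v => ((g v : ℤ) : ZMod p), ?_⟩
    show lap Γ _ = _
    rw [lap_cast Γ p g]
    rfl
  set ψ : SandpileGroup Γ →+ Q :=
    QuotientAddGroup.lift (lapHom Γ).range φ hφker with hψ
  have hψsurj : Function.Surjective ψ := by
    intro q
    obtain ⟨a, rfl⟩ := QuotientAddGroup.mk'_surjective Lhom.range q
    have : ∀ v : ↥Γ, ∃ k : ℤ, ((k : ℤ) : ZMod p) = a v := fun v => ZMod.intCast_surjective (a v)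
    choose b hb using this
    refine ⟨QuotientAddGroup.mk' (lapHom Γ).range b, ?_⟩
    show φ b = _
    rw [hφ]
    simp only [AddMonoidHom.coe_comp, Function.comp_apply]
    congr 1
    funext v
    exact hb v
  -- p divides card Q
  have hQfin : Finite Q := Quotient.finite _
  have hpQ : p ∣ Nat.card Q := by
    have hord : addOrderOf ((QuotientAddGroup.mk' Lhom.range) u) = p := by
      have hdvd' : addOrderOf ((QuotientAddGroup.mk' Lhom.range) u) ∣ p := by
        apply addOrderOf_dvd_of_nsmul_eq_zero
        rw [← AddMonoidHom.map_nsmul]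
        have : p • u = 0 := by
          funext v
          show p • u v = 0
          rw [nsmul_eq_mul, ZMod.natCast_self, zero_mul]
        rw [this, map_zero]
      rcases (Nat.Prime.eq_one_or_self_of_dvd hp _ hdvd') with h | h
      · exact absurd (AddMonoid.addOrderOf_eq_one_iff.mp h) huQ
      · exact h
    rw [← hord]
    exact addOrderOf_dvd_natCard _
  exact hpQ.trans (AddSubgroup.card_dvd_of_surjective ψ hψsurj)

/-- In a finite abelian group whose cardinality is divisible by each prime in `S`,
there is an element of order `∏ p ∈ S, p`. -/
lemma exists_addOrderOf_eq_prod {G : Type*} [AddCommGroup G] [Finite G] (S : Finset ℕ)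
    (hS : ∀ p ∈ S, p.Prime ∧ p ∣ Nat.card G) : ∃ g : G, addOrderOf g = ∏ p ∈ S, p := by
  classical
  haveI := Fintype.ofFinite G
  induction S using Finset.induction_on with
  | empty => exact ⟨0, by simp⟩
  | @insert p S hpS ih =>
    obtain ⟨g, hg⟩ := ih (fun q hq => hS q (Finset.mem_insert_of_mem hq))
    obtain ⟨hpp, hpdvd⟩ := hS p (Finset.mem_insert_self p S)
    haveI : Fact p.Prime := ⟨hpp⟩
    have hpdvd' : p ∣ Fintype.card G := by rwa [← Nat.card_eq_fintype_card]
    obtain ⟨h, hh⟩ := exists_prime_addOrderOf_dvd_card p hpdvd'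
    have hco : Nat.Coprime (addOrderOf h) (addOrderOf g) := by
      rw [hh, hg]
      refine (Nat.Prime.coprime_iff_not_dvd hpp).mpr ?_
      intro hpd
      obtain ⟨q, hqS, hpq⟩ := (Nat.Prime.prime hpp).exists_mem_finset_dvd hpd
      have : p = q := ((Nat.prime_dvd_prime_iff_eq hpp (hS q (Finset.mem_insert_of_mem hqS)).1).mp hpq)
      exact hpS (this ▸ hqS)
    refine ⟨h + g, ?_⟩
    rw [(AddCommute.all h g).addOrderOf_add_eq_mul_addOrderOf_of_coprime hco, hh, hg,
      Finset.prod_insert hpS]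

/-- For every `N ≥ 1`, the sandpile group on the `N×N` square
domain contains a cyclic subgroup whose order is the radical of `N+1`, i.e. the
product of all distinct prime factors of `N+1`. -/
theorem square_has_cyclic_subgroup_radical (N : ℕ) (hN : 1 ≤ N) :
    ∃ S : AddSubgroup (SandpileGroup (squareDomain N)),
      IsAddCyclic ↥S ∧ Nat.card ↥S = ∏ p ∈ (N + 1).primeFactors, p := by
  classical
  haveI := sandpile_finite hN
  have hdvds : ∀ q ∈ (N + 1).primeFactors,
      q.Prime ∧ q ∣ Nat.card (SandpileGroup (squareDomain N)) := by
    intro q hq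
    exact ⟨Nat.prime_of_mem_primeFactors hq,
      prime_dvd_card hN (Nat.prime_of_mem_primeFactors hq) (Nat.dvd_of_mem_primeFactors hq)⟩
  obtain ⟨g, hg⟩ := exists_addOrderOf_eq_prod (N + 1).primeFactors hdvds
  refine ⟨AddSubgroup.zmultiples g, ?_, ?_⟩
  · refine ⟨⟨⟨g, AddSubgroup.mem_zmultiples g⟩, ?_⟩⟩
    rintro ⟨x, hx⟩
    obtain ⟨k, hk⟩ := AddSubgroup.mem_zmultiples_iff.mp hx
    exact ⟨k, Subtype.ext (by simpa using hk)⟩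
  · rw [Nat.card_zmultiples, hg]
end

section
/- Let H : Q → ℤ be the function on the quadrant Q determined by the boundary conditions and the harmonicity recursion described in the context. Then for all (x,y) ∈ Q, the reflection identity (x − y)·H(x,y) = −(x + y)·H(x,−y) holds. -/
def quadSg (x : ℤ) : ℤ := (-1) ^ ((x - 1) / 2).toNat

lemma quadSg_step (x : ℤ) (hx : Odd x) (h1 : 1 ≤ x) : quadSg (x + 2) = -quadSg x := by
  have hx2 : x % 2 = 1 := Int.odd_iff.mp hx
  unfold quadSg
  have h : ((x + 2 - 1) / 2).toNat = ((x - 1) / 2).toNat + 1 := by omega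
  rw [h, pow_succ]; ring

def quadC (H : ℤ → ℤ → ℤ) (x : ℤ) : Prop :=
  (3 ≤ x →
    H x (x - 4) = quadSg x * (x - 2) ^ 2 ∧
    H x (-x + 4) = -(2 * quadSg x * (x - 2)) ∧
    H x (-x + 6) = quadSg x * (2 * x ^ 2 - 12 * x + 19)) ∧
  (∀ y : ℤ, Odd y → |y| ≤ x - 2 →
    2 * (H x y + H x (-y)) = H (x - 2) y + H (x - 2) (-y) + H x (y + 2) + H x (-y + 2)) ∧
  (∀ y : ℤ, Odd y → |y| ≤ x → (x - y) * H x y = -(x + y) * H x (-y))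

section Quad

variable (H : ℤ → ℤ → ℤ)
    (hh1 : ∀ x : ℤ, Odd x → 1 ≤ x → H x x = quadSg x ∧ H x (-x) = 0)
    (hh2 : ∀ x : ℤ, Odd x → 3 ≤ x →
      H x (x - 2) = -(quadSg x * (x - 1)) ∧ H x (-x + 2) = quadSg x)
    (hh3 : ∀ x y : ℤ, Odd x → Odd y → |y| ≤ x - 2 →
      4 * H x y = H (x + 2) y + H (x - 2) y + H x (y + 2) + H x (y - 2))

include hh1 hh2 in
lemma quad_L2b : ∀ z : ℤ, Odd z → 1 ≤ z → H z (-z + 2) = quadSg z := by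
  intro z hz hz1
  rcases le_or_gt 3 z with h | h
  · exact (hh2 z hz h).2
  · have hz2 : z % 2 = 1 := Int.odd_iff.mp hz
    have : z = 1 := by omega
    subst this
    have := (hh1 1 hz le_rfl).1
    rw [show (-1 + 2 : ℤ) = 1 by norm_num]
    exact this

include hh1 hh2 hh3 in
lemma quad_step (x : ℤ) (hx : Odd x) (hx3 : 3 ≤ x)
    (ih1 : quadC H (x - 2)) (ih2 : quadC H x) : quadC H (x + 2) := by
  have hx2 : x % 2 = 1 := Int.odd_iff.mp hx
  obtain ⟨ihB, ihT, ihP⟩ := ih2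
  obtain ⟨_, ihT1, ihP1⟩ := ih1
  obtain ⟨b2x, b1x, b3x⟩ := ihB hx3
  have oxm : Odd (x - 2) := Int.odd_iff.mpr (by omega)
  have oxp : Odd (x + 2) := Int.odd_iff.mpr (by omega)
  have hs2 : quadSg (x + 2) = -quadSg x := quadSg_step x hx (by omega)
  have hsm : quadSg (x - 2) = -quadSg x := by
    have := quadSg_step (x - 2) oxm (by omega)
    rw [show x - 2 + 2 = x by ring] at this
    linarith
  -- boundary values at column x
  have vxx : H x x = quadSg x := (hh1 x hx (by omega)).1
  have vxmx : H x (-x) = 0 := (hh1 x hx (by omega)).2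
  have vx2 : H x (x - 2) = -(quadSg x * (x - 1)) := (hh2 x hx hx3).1
  have vxm2 : H x (-x + 2) = quadSg x := (hh2 x hx hx3).2
  -- boundary values at column x + 2
  have vtop : H (x + 2) (x + 2) = -quadSg x := by
    have := (hh1 (x + 2) oxp (by omega)).1; rw [hs2] at this; exact this
  have vbot : H (x + 2) (-(x + 2)) = 0 := (hh1 (x + 2) oxp (by omega)).2
  have vbot' : H (x + 2) (-x - 2) = 0 := by
    rw [show (-x - 2 : ℤ) = -(x + 2) by ring]; exact vbot
  have v2a : H (x + 2) x = quadSg x * (x + 1) := by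
    have := (hh2 (x + 2) oxp (by omega)).1
    rw [show x + 2 - 2 = x by ring, hs2] at this
    linear_combination this
  have v2b : H (x + 2) (-x) = -quadSg x := by
    have := (hh2 (x + 2) oxp (by omega)).2
    rw [show -(x + 2) + 2 = -x by ring, hs2] at this
    exact this
  -- new near-boundary values at column x + 2
  have nb1 : H (x + 2) (-x + 2) = 2 * quadSg x * x := by
    have vm : H (x - 2) (-x + 2) = 0 := by
      have := (hh1 (x - 2) oxm (by omega)).2
      rw [show -(x - 2) = -x + 2 by ring] at this; exact this
    have rec3 := hh3 x (-x + 2) hx (Int.odd_iff.mpr (by omega))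
      (abs_le.mpr ⟨by omega, by omega⟩)
    rw [show -x + 2 + 2 = -x + 4 by ring, show -x + 2 - 2 = -x by ring] at rec3
    linear_combination -rec3 + 4 * vxm2 - vm - b1x - vxmx
  have nb2 : H (x + 2) (x - 2) = -(quadSg x * x ^ 2) := by
    have vdd : H (x - 2) (x - 2) = -quadSg x := by
      have := (hh1 (x - 2) oxm (by omega)).1; rw [hsm] at this; exact this
    have hrec := hh3 x (x - 2) hx (Int.odd_iff.mpr (by omega))
      (abs_le.mpr ⟨by omega, by omega⟩)
    rw [show x - 2 + 2 = x by ring, show x - 2 - 2 = x - 4 by ring] at hrec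
    linear_combination -hrec + 4 * vx2 - vdd - vxx - b2x
  have nb3 : H (x + 2) (-x + 4) = -(quadSg x * (2 * x ^ 2 - 4 * x + 3)) := by
    have w : H (x - 2) (-x + 4) = -quadSg x := by
      have := quad_L2b H hh1 hh2 (x - 2) oxm (by omega)
      rw [show -(x - 2) + 2 = -x + 4 by ring, hsm] at this; exact this
    have hrec := hh3 x (-x + 4) hx (Int.odd_iff.mpr (by omega))
      (abs_le.mpr ⟨by omega, by omega⟩)
    rw [show -x + 4 + 2 = -x + 6 by ring, show -x + 4 - 2 = -x + 2 by ring] at hrec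
    linear_combination -hrec + 4 * b1x - w - b3x - vxm2
  refine ⟨?_, ?_, ?_⟩
  · -- the three B statements at x + 2
    intro _
    refine ⟨?_, ?_, ?_⟩
    · rw [show x + 2 - 4 = x - 2 by ring, hs2]
      linear_combination nb2
    · rw [show -(x + 2) + 4 = -x + 2 by ring, hs2]
      linear_combination nb1
    · rw [show -(x + 2) + 6 = -x + 4 by ring, hs2]
      linear_combination nb3
  · -- T at x + 2
    intro y hy hab
    rw [show x + 2 - 2 = x by ring]
    obtain ⟨hl, hr⟩ := abs_le.mp hab
    have hy2 : y % 2 = 1 := Int.odd_iff.mp hy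
    have hcase : y = x ∨ y = -x ∨ y = x - 2 ∨ y = -x + 2 ∨ (-x + 4 ≤ y ∧ y ≤ x - 4) := by
      omega
    rcases hcase with hc | hc | hc | hc | ⟨hil, hir⟩
    · rw [hc]
      linear_combination 2 * v2a + 2 * v2b - vxx - vxmx - vtop - nb1
    · rw [hc, neg_neg]
      linear_combination 2 * v2b + 2 * v2a - vxmx - vxx - nb1 - vtop
    · rw [hc, show -(x - 2) = -x + 2 by ring, show x - 2 + 2 = x by ring,
        show -x + 2 + 2 = -x + 4 by ring]
      linear_combination 2 * nb2 + 2 * nb1 - vx2 - vxm2 - v2a - nb3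
    · rw [hc, show -(-x + 2) = x - 2 by ring, show -x + 2 + 2 = -x + 4 by ring,
        show x - 2 + 2 = x by ring]
      linear_combination 2 * nb1 + 2 * nb2 - vxm2 - vx2 - nb3 - v2a
    · -- interior case for T
      have oy := hy
      have oy2 : Odd (y + 2) := Int.odd_iff.mpr (by omega)
      have oym : Odd (y - 2) := Int.odd_iff.mpr (by omega)
      have oyn : Odd (-y) := Int.odd_iff.mpr (by omega)
      have oyn2 : Odd (-y + 2) := Int.odd_iff.mpr (by omega)
      have r1 := hh3 x y hx oy (abs_le.mpr ⟨by omega, by omega⟩)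
      have r2 := hh3 x (-y) hx oyn (abs_le.mpr ⟨by omega, by omega⟩)
      have r3 := hh3 x (y + 2) hx oy2 (abs_le.mpr ⟨by omega, by omega⟩)
      rw [show y + 2 + 2 = y + 4 by ring, show y + 2 - 2 = y by ring] at r3
      have r4 := hh3 x (-y + 2) hx oyn2 (abs_le.mpr ⟨by omega, by omega⟩)
      rw [show -y + 2 + 2 = -y + 4 by ring, show -y + 2 - 2 = -y by ring] at r4
      have q1 := hh3 (x - 2) y oxm oy (abs_le.mpr ⟨by omega, by omega⟩)
      rw [show x - 2 + 2 = x by ring, show x - 2 - 2 = x - 4 by ring] at q1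
      have q2 := hh3 (x - 2) (-y) oxm oyn (abs_le.mpr ⟨by omega, by omega⟩)
      rw [show x - 2 + 2 = x by ring, show x - 2 - 2 = x - 4 by ring] at q2
      have t0 := ihT y oy (abs_le.mpr ⟨by omega, by omega⟩)
      have tp := ihT (y + 2) oy2 (abs_le.mpr ⟨by omega, by omega⟩)
      rw [show -(y + 2) = -y - 2 by ring, show y + 2 + 2 = y + 4 by ring,
        show -y - 2 + 2 = -y by ring] at tp
      have tm := ihT (y - 2) oym (abs_le.mpr ⟨by omega, by omega⟩)
      rw [show -(y - 2) = -y + 2 by ring, show y - 2 + 2 = y by ring,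
        show -y + 2 + 2 = -y + 4 by ring] at tm
      have t2 := ihT1 y oy (abs_le.mpr ⟨by omega, by omega⟩)
      rw [show x - 2 - 2 = x - 4 by ring] at t2
      linear_combination -2 * r1 - 2 * r2 + r3 + r4 + q1 + q2 + 4 * t0 - tp - tm - t2
  · -- P at x + 2
    intro y hy hab
    obtain ⟨hl, hr⟩ := abs_le.mp hab
    have hy2 : y % 2 = 1 := Int.odd_iff.mp hy
    have hcase : y = x + 2 ∨ y = -x - 2 ∨ y = x ∨ y = -x ∨ (-(x - 2) ≤ y ∧ y ≤ x - 2) := by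
      omega
    rcases hcase with hc | hc | hc | hc | ⟨hil, hir⟩
    · rw [hc]
      linear_combination (2 * x + 4) * vbot
    · rw [hc, show -(-x - 2) = x + 2 by ring]
      linear_combination (2 * x + 4) * vbot'
    · rw [hc]
      linear_combination 2 * v2a + (2 * x + 2) * v2b
    · rw [hc, neg_neg]
      linear_combination (2 * x + 2) * v2b + 2 * v2a
    · -- interior case for P
      have oy := hy
      have oyn : Odd (-y) := Int.odd_iff.mpr (by omega)
      have oy2 : Odd (y + 2) := Int.odd_iff.mpr (by omega)
      have oym : Odd (y - 2) := Int.odd_iff.mpr (by omega)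
      have r1 := hh3 x y hx oy (abs_le.mpr ⟨by omega, by omega⟩)
      have r2 := hh3 x (-y) hx oyn (abs_le.mpr ⟨by omega, by omega⟩)
      have p0 := ihP y oy (abs_le.mpr ⟨by omega, by omega⟩)
      have pb := ihP1 y oy (abs_le.mpr ⟨by omega, by omega⟩)
      have pc := ihP (y + 2) oy2 (abs_le.mpr ⟨by omega, by omega⟩)
      rw [show -(y + 2) = -y - 2 by ring] at pc
      have pd := ihP (y - 2) oym (abs_le.mpr ⟨by omega, by omega⟩)
      rw [show -(y - 2) = -y + 2 by ring] at pd
      have t0 := ihT y oy (abs_le.mpr ⟨by omega, by omega⟩)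
      linear_combination (-(x + 2 - y)) * r1 + (-(x + 2 + y)) * r2 + 4 * p0 - pb - pc - pd
        + 4 * t0
include hh1 hh2 hh3 in
lemma quad_base1 : quadC H 1 := by
  refine ⟨by omega, ?_, ?_⟩
  · intro y hy hab
    exact absurd (le_trans (abs_nonneg y) hab) (by norm_num)
  · intro y hy hab
    obtain ⟨hl, hr⟩ := abs_le.mp hab
    have hy2 : y % 2 = 1 := Int.odd_iff.mp hy
    have o1 : Odd (1 : ℤ) := ⟨0, by ring⟩
    have v : H 1 (-1) = 0 := (hh1 1 o1 le_rfl).2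
    have hc : y = 1 ∨ y = -1 := by omega
    rcases hc with rfl | rfl
    · linear_combination 2 * v
    · linear_combination 2 * v

include hh1 hh2 hh3 in
lemma quad_base3 : quadC H 3 := by
  have o1 : Odd (1 : ℤ) := ⟨0, by ring⟩
  have o3 : Odd (3 : ℤ) := ⟨1, by ring⟩
  have s1 : quadSg 1 = 1 := by decide
  have s3 : quadSg 3 = -1 := by decide
  have v11 : H 1 1 = 1 := by have := (hh1 1 o1 le_rfl).1; rw [s1] at this; exact this
  have v1m1 : H 1 (-1) = 0 := (hh1 1 o1 le_rfl).2
  have v33 : H 3 3 = -1 := by have := (hh1 3 o3 (by norm_num)).1; rw [s3] at this; exact this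
  have v3m3 : H 3 (-3) = 0 := (hh1 3 o3 (by norm_num)).2
  have v31 : H 3 1 = 2 := by
    have := (hh2 3 o3 le_rfl).1
    rw [show (3 - 2 : ℤ) = 1 by norm_num, s3] at this
    linarith
  have v3m1 : H 3 (-1) = -1 := by
    have := (hh2 3 o3 le_rfl).2
    rw [show (-3 + 2 : ℤ) = -1 by norm_num, s3] at this
    exact this
  refine ⟨?_, ?_, ?_⟩
  · intro _
    refine ⟨?_, ?_, ?_⟩
    · rw [show (3 - 4 : ℤ) = -1 by norm_num, s3]; linear_combination v3m1
    · rw [show (-3 + 4 : ℤ) = 1 by norm_num, s3]; linear_combination v31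
    · rw [show (-3 + 6 : ℤ) = 3 by norm_num, s3]; linear_combination v33
  · intro y hy hab
    obtain ⟨hl, hr⟩ := abs_le.mp hab
    have hy2 : y % 2 = 1 := Int.odd_iff.mp hy
    have hc : y = 1 ∨ y = -1 := by omega
    rcases hc with rfl | rfl
    · rw [show (3 - 2 : ℤ) = 1 by norm_num, show (1 + 2 : ℤ) = 3 by norm_num,
        show (-1 + 2 : ℤ) = 1 by norm_num]
      linarith [v31, v3m1, v11, v1m1, v33]
    · rw [neg_neg, show (3 - 2 : ℤ) = 1 by norm_num, show (-1 + 2 : ℤ) = 1 by norm_num,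
        show (1 + 2 : ℤ) = 3 by norm_num]
      linarith [v31, v3m1, v11, v1m1, v33]
  · intro y hy hab
    obtain ⟨hl, hr⟩ := abs_le.mp hab
    have hy2 : y % 2 = 1 := Int.odd_iff.mp hy
    have hc : y = 3 ∨ y = -3 ∨ y = 1 ∨ y = -1 := by omega
    rcases hc with rfl | rfl | rfl | rfl
    · linear_combination 6 * v3m3
    · linear_combination 6 * v3m3
    · linear_combination 2 * v31 + 4 * v3m1
    · rw [neg_neg]; linear_combination 4 * v3m1 + 2 * v31

include hh1 hh2 hh3 in
lemma quad_main : ∀ n : ℕ, quadC H (2 * (n : ℤ) + 1) ∧ quadC H (2 * (n : ℤ) + 3) := by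
  intro n
  induction n with
  | zero =>
    constructor
    · norm_num
      exact quad_base1 H hh1 hh2 hh3
    · norm_num
      exact quad_base3 H hh1 hh2 hh3
  | succ n ih =>
    have hstep := quad_step H hh1 hh2 hh3 (2 * (n : ℤ) + 3)
      (Int.odd_iff.mpr (by omega)) (by omega)
      (by rw [show (2 * (n : ℤ) + 3) - 2 = 2 * (n : ℤ) + 1 by ring]; exact ih.1) ih.2
    rw [show (2 * (n : ℤ) + 3) + 2 = 2 * (n : ℤ) + 5 by ring] at hstep
    constructor
    · push_cast
      rw [show (2 * ((n : ℤ) + 1) + 1 : ℤ) = 2 * (n : ℤ) + 3 by ring]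
      exact ih.2
    · push_cast
      rw [show (2 * ((n : ℤ) + 1) + 3 : ℤ) = 2 * (n : ℤ) + 5 by ring]
      exact hstep

end Quad

/-- Let `H` be the function on the quadrant
`Q = {(x,y) : x, y odd, 1 ≤ x, |y| ≤ x}` determined by the boundary conditions
(i), (ii) and the harmonicity recursion (iii). Then the reflection identity
`(x − y)·H(x,y) = −(x + y)·H(x,−y)` holds on `Q`. -/
theorem quadrant_reflection_identity (H : ℤ → ℤ → ℤ)
    (h1 : ∀ x : ℤ, Odd x → 1 ≤ x →
      H x x = (-1) ^ ((x - 1) / 2).toNat ∧ H x (-x) = 0)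
    (h2 : ∀ x : ℤ, Odd x → 3 ≤ x →
      H x (x - 2) = -((-1) ^ ((x - 1) / 2).toNat * (x - 1)) ∧
      H x (-x + 2) = (-1) ^ ((x - 1) / 2).toNat)
    (h3 : ∀ x y : ℤ, Odd x → Odd y → |y| ≤ x - 2 →
      4 * H x y = H (x + 2) y + H (x - 2) y + H x (y + 2) + H x (y - 2)) :
    ∀ x y : ℤ, Odd x → Odd y → 1 ≤ x → |y| ≤ x →
      (x - y) * H x y = -(x + y) * H x (-y) := by
  intro x y hx hy hx1 hyx
  have hx2 : x % 2 = 1 := Int.odd_iff.mp hx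
  have hC := (quad_main H h1 h2 h3 ((x - 1) / 2).toNat).1
  rw [show (2 * ((((x - 1) / 2).toNat : ℤ)) + 1) = x by omega] at hC
  exact hC.2.2 y hy hyx
end

section
/- Let H : Q → ℤ be the function on the quadrant Q determined by the boundary conditions and the harmonicity recursion described in the context. Then for every odd x ≥ 5, H(x,x−4) = (−1)^{(x−1)/2}·(x−2)² and H(x,−x+4) = −(−1)^{(x−1)/2}·(2x−4). -/
/-- Let `H` be the function on the quadrant
`Q = {(x,y) : x, y odd, 1 ≤ x, |y| ≤ x}` determined by the boundary conditions
(i), (ii) and the harmonicity recursion (iii). Then for every odd `x ≥ 5`,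
`H(x, x−4) = (−1)^{(x−1)/2}·(x−2)²` and `H(x, −x+4) = −(−1)^{(x−1)/2}·(2x−4)`. -/
theorem quadrant_third_diagonals (H : ℤ → ℤ → ℤ)
    (h1 : ∀ x : ℤ, Odd x → 1 ≤ x →
      H x x = (-1) ^ ((x - 1) / 2).toNat ∧ H x (-x) = 0)
    (h2 : ∀ x : ℤ, Odd x → 3 ≤ x →
      H x (x - 2) = -((-1) ^ ((x - 1) / 2).toNat * (x - 1)) ∧
      H x (-x + 2) = (-1) ^ ((x - 1) / 2).toNat)
    (h3 : ∀ x y : ℤ, Odd x → Odd y → |y| ≤ x - 2 →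
      4 * H x y = H (x + 2) y + H (x - 2) y + H x (y + 2) + H x (y - 2)) :
    ∀ x : ℤ, Odd x → 5 ≤ x →
      H x (x - 4) = (-1) ^ ((x - 1) / 2).toNat * (x - 2) ^ 2 ∧
      H x (-x + 4) = -((-1) ^ ((x - 1) / 2).toNat * (2 * x - 4)) := by
  have key : ∀ n : ℕ, H (2*(n:ℤ)+5) (2*(n:ℤ)+1) = (-1)^n * (2*(n:ℤ)+3)^2 ∧
      H (2*(n:ℤ)+5) (-(2*(n:ℤ)+1)) = -((-1)^n * (4*(n:ℤ)+6)) := by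
    intro n
    induction n with
    | zero =>
      have e1 := h1 1 ⟨0, by ring⟩ (by norm_num)
      have e3 := h1 3 ⟨1, by ring⟩ (by norm_num)
      have f3 := h2 3 ⟨1, by ring⟩ (by norm_num)
      have r1 := h3 3 1 ⟨1, by ring⟩ ⟨0, by ring⟩ (by norm_num)
      have r2 := h3 3 (-1) ⟨1, by ring⟩ ⟨-1, by ring⟩ (by norm_num)
      norm_num at e1 e3 f3 r1 r2 ⊢
      constructor <;> linarith
    | succ n ih =>
      obtain ⟨ih1, ih2⟩ := ih
      have hx : ((2*(n:ℤ)+5-1)/2).toNat = n + 2 := by omega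
      have hx3 : ((2*(n:ℤ)+3-1)/2).toNat = n + 1 := by omega
      have e5 := h1 (2*(n:ℤ)+5) ⟨n+2, by ring⟩ (by omega)
      have e3 := h1 (2*(n:ℤ)+3) ⟨n+1, by ring⟩ (by omega)
      have f5 := h2 (2*(n:ℤ)+5) ⟨n+2, by ring⟩ (by omega)
      rw [hx] at e5 f5
      rw [hx3] at e3
      have r1 := h3 (2*(n:ℤ)+5) (2*(n:ℤ)+3) ⟨n+2, by ring⟩
        ⟨n+1, by ring⟩ (by rw [abs_of_nonneg (by positivity)]; omega)
      have r2 := h3 (2*(n:ℤ)+5) (-(2*(n:ℤ)+3)) ⟨n+2, by ring⟩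
        ⟨-(n+2), by ring⟩ (by rw [abs_of_nonpos (by omega)]; omega)
      have s1 : 2*(n:ℤ)+5-2 = 2*(n:ℤ)+3 := by ring
      have s2 : -(2*(n:ℤ)+5)+2 = -(2*(n:ℤ)+3) := by ring
      have s3 : 2*(n:ℤ)+3+2 = 2*(n:ℤ)+5 := by ring
      have s4 : 2*(n:ℤ)+3-2 = 2*(n:ℤ)+1 := by ring
      have s5 : -(2*(n:ℤ)+3)+2 = -(2*(n:ℤ)+1) := by ring
      have s6 : -(2*(n:ℤ)+3)-2 = -(2*(n:ℤ)+5) := by ring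
      have hs : ((-1:ℤ))^(n+2) = (-1)^n := by rw [pow_add]; norm_num
      rw [s1, s2, hs] at f5
      rw [hs] at e5
      rw [s1, s3, s4] at r1
      rw [s1, s5, s6] at r2
      push_cast
      rw [show 2*((n:ℤ)+1)+5 = 2*(n:ℤ)+5+2 from by ring,
          show 2*((n:ℤ)+1)+1 = 2*(n:ℤ)+3 from by ring]
      constructor
      · linear_combination (-1)*r1 + 4*f5.1 - e3.1 - e5.1 - ih1
      · linear_combination (-1)*r2 + 4*f5.2 - e3.2 - e5.2 - ih2
  intro x hx hx5
  obtain ⟨k, hk⟩ := hx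
  set n := (k-2).toNat with hn
  have hxn : x = 2*(n:ℤ)+5 := by omega
  have ht : ((x-1)/2).toNat = n + 2 := by omega
  obtain ⟨k1, k2⟩ := key n
  rw [ht]
  have hs : ((-1:ℤ))^(n+2) = (-1)^n := by rw [pow_add]; norm_num
  rw [hs]
  constructor
  · rw [show x - 4 = 2*(n:ℤ)+1 by omega, hxn, k1]; ring
  · rw [show -x + 4 = -(2*(n:ℤ)+1) by omega, hxn, k2]; ring
end

section
/- Let H : Q → ℤ be the function on the quadrant Q determined by the boundary conditions and the harmonicity recursion described in the context. If (x,y) ∈ Q with |y| < x and x is a prime number, then x divides H(x,y) − H(x,−y). -/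
open Polynomial

noncomputable def Vq : ℕ → Polynomial ℤ
  | 0 => C 2
  | 1 => 1 + X
  | n+2 => (1 + X) * Vq (n+1) + X * Vq n

lemma Vq_succ_succ (n : ℕ) : Vq (n+2) = (1 + X) * Vq (n+1) + X * Vq n := rfl

lemma Vq_two_step (n : ℕ) : Vq (n+4) = (1 + 4*X + X^2) * Vq (n+2) - X^2 * Vq n := by
  rw [Vq_succ_succ (n+2), Vq_succ_succ (n+1)]
  linear_combination (-X : Polynomial ℤ) * Vq_succ_succ n

-- coefficient of a product with (1+X), at successor index
lemma coeff_oneX (W : Polynomial ℤ) (k : ℕ) :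
    ((1+X) * W).coeff (k+1) = W.coeff (k+1) + W.coeff k := by
  rw [add_mul, one_mul, coeff_add, coeff_X_mul]

lemma coeff_zero_oneX (W : Polynomial ℤ) : ((1+X) * W).coeff 0 = W.coeff 0 := by
  rw [mul_coeff_zero]; simp

lemma Vq_coeff_zero : ∀ n, (Vq (n+1)).coeff 0 = 1 := by
  intro n
  induction n with
  | zero => simp [Vq]
  | succ n ih =>
    rw [Vq_succ_succ, coeff_add, coeff_zero_oneX, mul_coeff_zero]
    simp [ih]

lemma Vq0_coeff_zero : (Vq 0).coeff 0 = 2 := by simp [Vq]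

lemma Vq_coeff_one : ∀ n, (Vq (n+2)).coeff 1 = 2*(n:ℤ)+4 := by
  intro n
  induction n with
  | zero =>
    rw [Vq_succ_succ, coeff_add, coeff_oneX, coeff_X_mul, Vq0_coeff_zero]
    have h1 : (Vq 1).coeff 1 = 1 := by
      rw [show Vq 1 = 1 + X from rfl, coeff_add, coeff_one, coeff_X]; norm_num
    have h0 : (Vq 1).coeff 0 = 1 := by
      rw [show Vq 1 = 1 + X from rfl, coeff_add, coeff_one, coeff_X]; norm_num
    rw [h1, h0]; norm_num
  | succ n ih =>
    rw [Vq_succ_succ, coeff_add, coeff_oneX, coeff_X_mul, ih,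
      Vq_coeff_zero, Vq_coeff_zero]
    push_cast; ring

lemma Vq_coeff_gt : ∀ n, ∀ k, n < k → (Vq n).coeff k = 0 := by
  intro n
  induction n using Nat.strong_induction_on with
  | _ n ih =>
    match n with
    | 0 => intro k hk
           rw [show Vq 0 = C 2 from rfl, coeff_C, if_neg (by omega : ¬ k = 0)]
    | 1 => intro k hk
           rw [show Vq 1 = 1 + X from rfl, coeff_add, coeff_one, coeff_X,
             if_neg (by omega : ¬ k = 0), if_neg (by omega : ¬ 1 = k)]
           norm_num
    | (n+2) =>
      intro k hk
      obtain ⟨k', rfl⟩ : ∃ k', k = k' + 1 := ⟨k - 1, by omega⟩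
      rw [Vq_succ_succ, coeff_add, coeff_oneX, coeff_X_mul,
        ih (n+1) (by omega) _ (by omega), ih (n+1) (by omega) _ (by omega),
        ih n (by omega) _ (by omega)]
      ring

lemma Vq_coeff_top : ∀ n, (Vq (n+1)).coeff (n+1) = 1 := by
  intro n
  induction n with
  | zero =>
    rw [show Vq 1 = 1 + X from rfl, coeff_add, coeff_one, coeff_X]; norm_num
  | succ n ih =>
    rw [Vq_succ_succ, coeff_add, coeff_oneX, coeff_X_mul,
      Vq_coeff_gt (n+1) (n+2) (by omega), ih, Vq_coeff_gt n (n+1) (by omega)]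
    ring

lemma Vq_coeff_subtop : ∀ n, (Vq (n+2)).coeff (n+1) = 2*(n:ℤ)+4 := by
  intro n
  induction n with
  | zero => exact Vq_coeff_one 0
  | succ n ih =>
    rw [Vq_succ_succ, coeff_add, coeff_oneX, coeff_X_mul, Vq_coeff_top,
      ih, Vq_coeff_top]
    push_cast; ring

noncomputable def Wq (m : ℕ) : Polynomial ℤ := Vq (2*m+1) + 1 + X^(2*m+1)

lemma Wq_def' (m : ℕ) : Wq m = Vq (2*m+1) + 1 + X^(2*m+1) := rfl

lemma Wq_PI (n : ℕ) :
    Wq (n+2) + X^2 * Wq n + C 4 * X + C 4 * X^(2*n+4)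
      = Wq (n+1) + C 4 * (X * Wq (n+1)) + X^2 * Wq (n+1) := by
  have hC : (C (4:ℤ) : Polynomial ℤ) = 4 := by norm_num
  rw [Wq_def', Wq_def', Wq_def', hC,
    show 2*(n+2)+1 = (2*n+1)+4 from by ring,
    show 2*(n+1)+1 = (2*n+1)+2 from by ring,
    Vq_two_step (2*n+1)]
  ring

lemma Wq_MRC (n i : ℕ) (hi : i ≤ 2*n+1) :
    (Wq (n+2)).coeff (i+2)
      = (Wq (n+1)).coeff (i+2) + 4*(Wq (n+1)).coeff (i+1)
        + (Wq (n+1)).coeff i - (Wq n).coeff i := by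
  have h := congrArg (fun q => Polynomial.coeff q (i+2)) (Wq_PI n)
  simp only [coeff_add, coeff_C_mul] at h
  rw [coeff_X_pow_mul (Wq n) 2 i, coeff_X_pow_mul (Wq (n+1)) 2 i] at h
  rw [show (X : Polynomial ℤ).coeff (i+2) = 0 from by
        rw [coeff_X, if_neg (by omega)],
      show (X^(2*n+4) : Polynomial ℤ).coeff (i+2) = 0 from by
        rw [coeff_X_pow, if_neg (by omega)]] at h
  have hx : (X * Wq (n+1)).coeff (i+2) = (Wq (n+1)).coeff (i+1) := by
    rw [show i+2 = (i+1)+1 from rfl, coeff_X_mul]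
  rw [hx] at h
  linarith [h]

lemma Wq_coeff_zero (m : ℕ) : (Wq m).coeff 0 = 2 := by
  rw [Wq_def', coeff_add, coeff_add, Vq_coeff_zero (2*m), coeff_one,
    coeff_X_pow, if_neg (show ¬(0 = 2*m+1) by omega)]
  norm_num

lemma Wq_coeff_one_zero : (Wq 0).coeff 1 = 2 := by
  rw [Wq_def', show 2*0+1 = 1 from rfl, pow_one, show Vq 1 = 1 + X from rfl]
  simp [coeff_add, coeff_one, coeff_X]

lemma Wq_coeff_one (m : ℕ) (hm : 1 ≤ m) : (Wq m).coeff 1 = 2*(2*(m:ℤ)+1) := by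
  obtain ⟨k, rfl⟩ : ∃ k, m = k + 1 := ⟨m - 1, by omega⟩
  rw [Wq_def', coeff_add, coeff_add,
    show 2*(k+1)+1 = (2*k+1)+2 from by ring, Vq_coeff_one (2*k+1),
    coeff_one, if_neg (show ¬(1 = 0) by omega),
    coeff_X_pow, if_neg (show ¬(1 = (2*k+1)+2) by omega)]
  push_cast; ring

lemma Wq_coeff_top (m : ℕ) : (Wq m).coeff (2*m+1) = 2 := by
  rw [Wq_def', coeff_add, coeff_add,
    show 2*m+1 = (2*m)+1 from rfl, Vq_coeff_top (2*m),
    coeff_one, if_neg (show ¬(2*m+1 = 0) by omega), coeff_X_pow, if_pos rfl]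
  norm_num

lemma Wq_coeff_subtop (m : ℕ) (hm : 1 ≤ m) : (Wq m).coeff (2*m) = 2*(2*(m:ℤ)+1) := by
  obtain ⟨k, rfl⟩ : ∃ k, m = k + 1 := ⟨m - 1, by omega⟩
  rw [Wq_def', coeff_add, coeff_add,
    show 2*(k+1)+1 = (2*k+1)+2 from by ring,
    show 2*(k+1) = (2*k+1)+1 from by ring, Vq_coeff_subtop (2*k+1),
    coeff_one, if_neg (show ¬((2*k+1)+1 = 0) by omega),
    coeff_X_pow, if_neg (show ¬((2*k+1)+1 = (2*k+1)+2) by omega)]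
  push_cast; ring

section Frob
variable (p : ℕ) [Fact p.Prime]

noncomputable abbrev Rq (p : ℕ) := Polynomial (ZMod p)

noncomputable def Mq : Matrix (Fin 2) (Fin 2) (Rq p) := !![1 + X, X; 1, 0]
noncomputable def Nq : Matrix (Fin 2) (Fin 2) (Rq p) := !![0, -X; -1, 1 + X]

lemma Mq_sq : Mq p * Mq p = (1 + X : Rq p) • Mq p + (X : Rq p) • (1 : Matrix (Fin 2) (Fin 2) (Rq p)) := by
  ext i j
  fin_cases i <;> fin_cases j <;>
    simp [Mq, Matrix.mul_apply, Fin.sum_univ_two, Matrix.one_apply] <;> ring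

lemma Nq_sq : Nq p * Nq p = (1 + X : Rq p) • Nq p + (X : Rq p) • (1 : Matrix (Fin 2) (Fin 2) (Rq p)) := by
  ext i j
  fin_cases i <;> fin_cases j <;>
    simp [Nq, Matrix.mul_apply, Fin.sum_univ_two, Matrix.one_apply] <;> ring

lemma MN_commute : Commute (Mq p) (Nq p) := by
  show Mq p * Nq p = Nq p * Mq p
  ext i j
  fin_cases i <;> fin_cases j <;>
    simp [Mq, Nq, Matrix.mul_apply, Fin.sum_univ_two] <;> ring

lemma MN_sum : Mq p + Nq p = (1 + X : Rq p) • (1 : Matrix (Fin 2) (Fin 2) (Rq p)) := by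
  ext i j
  fin_cases i <;> fin_cases j <;>
    simp [Mq, Nq, Matrix.one_apply]

noncomputable def Vbar (n : ℕ) : Rq p := (Vq n).map (Int.castRingHom (ZMod p))

lemma Vbar_zero : Vbar p 0 = C 2 := by simp [Vbar, Vq, map_ofNat]
lemma Vbar_one : Vbar p 1 = 1 + X := by simp [Vbar, Vq]
lemma Vbar_succ_succ (n : ℕ) :
    Vbar p (n+2) = (1 + X) * Vbar p (n+1) + X * Vbar p n := by
  simp [Vbar, Vq_succ_succ, Polynomial.map_add, Polynomial.map_mul]

lemma trace_pow_rec (A : Matrix (Fin 2) (Fin 2) (Rq p))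
    (hA : A * A = (1 + X : Rq p) • A + (X : Rq p) • 1) (n : ℕ) :
    Matrix.trace (A^(n+2)) = (1+X) * Matrix.trace (A^(n+1)) + X * Matrix.trace (A^n) := by
  have : A^(n+2) = (1 + X : Rq p) • A^(n+1) + (X : Rq p) • A^n := by
    rw [pow_add, pow_two, hA, mul_add, mul_smul_comm, mul_smul_comm, mul_one,
      ← pow_succ]
  rw [this, Matrix.trace_add, Matrix.trace_smul, Matrix.trace_smul,
    smul_eq_mul, smul_eq_mul]

lemma trace_A_pow (A : Matrix (Fin 2) (Fin 2) (Rq p))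
    (hA : A * A = (1 + X : Rq p) • A + (X : Rq p) • 1)
    (htr : Matrix.trace A = 1 + X) :
    ∀ n, Matrix.trace (A^n) = Vbar p n := by
  have key : ∀ n, Matrix.trace (A^n) = Vbar p n ∧ Matrix.trace (A^(n+1)) = Vbar p (n+1) := by
    intro n
    induction n with
    | zero =>
      constructor
      · rw [pow_zero, Vbar_zero, Matrix.trace_one]
        norm_num
        exact (map_ofNat C 2).symm
      · rw [pow_one, Vbar_one, htr]
    | succ n ih =>
      refine ⟨ih.2, ?_⟩
      rw [trace_pow_rec p A hA n, Vbar_succ_succ, ih.1, ih.2]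
  exact fun n => (key n).1

lemma Vbar_eq_pow (hp2 : p ≠ 2) : Vbar p p = (1 + X : Rq p)^p := by
  have hM := trace_A_pow p (Mq p) (Mq_sq p) (by simp [Mq, Matrix.trace_fin_two_of]) p
  have hN := trace_A_pow p (Nq p) (Nq_sq p) (by simp [Nq, Matrix.trace_fin_two_of]) p
  have hchar : (Mq p + Nq p)^p = Mq p ^ p + Nq p ^ p :=
    add_pow_char_of_commute p (MN_commute p)
  rw [MN_sum] at hchar
  have hpow : ((1 + X : Rq p) • (1 : Matrix (Fin 2) (Fin 2) (Rq p)))^p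
      = ((1+X : Rq p)^p) • (1 : Matrix (Fin 2) (Fin 2) (Rq p)) := by
    rw [_root_.smul_pow, one_pow]
  rw [hpow] at hchar
  have htr := congrArg Matrix.trace hchar
  rw [Matrix.trace_smul, Matrix.trace_add, hM, hN, Matrix.trace_one, smul_eq_mul] at htr
  norm_num at htr
  have h2 : (2 : Rq p) ≠ 0 := by
    intro h
    rw [show (2 : Rq p) = C 2 from (map_ofNat C 2).symm,
      show (0 : Rq p) = C 0 from (map_zero C).symm] at h
    have h' : (2 : ZMod p) = 0 := C_inj.mp h
    have h'' : ((2:ℕ) : ZMod p) = 0 := by push_cast; exact h'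
    rw [ZMod.natCast_eq_zero_iff] at h''
    have hp := (Fact.out : p.Prime)
    have := Nat.le_of_dvd (by norm_num) h''
    have := hp.two_le
    omega
  have key : (2 : Rq p) * Vbar p p = (2 : Rq p) * ((1+X)^p) := by
    linear_combination -htr
  exact mul_left_cancel₀ h2 key

lemma Wq_coeff_dvd (hp2 : p ≠ 2) (j : ℕ) (h0 : 0 < j) (hj : j < p) (m : ℕ) (hm : 2*m+1 = p) :
    (p:ℤ) ∣ (Wq m).coeff j := by
  have hp := (Fact.out : p.Prime)
  have hV : ((Vq p).coeff j : ZMod p) = 0 := by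
    have := congrArg (fun q => Polynomial.coeff q j) (Vbar_eq_pow p hp2)
    simp only [Vbar, Polynomial.coeff_map] at this
    rw [Polynomial.coeff_one_add_X_pow] at this
    have hch : ((p.choose j : ℕ) : ZMod p) = 0 := by
      rw [ZMod.natCast_eq_zero_iff]
      exact hp.dvd_choose_self (by omega) hj
    rw [hch] at this
    simpa using this
  rw [Wq_def', hm, coeff_add, coeff_add, coeff_one, if_neg (by omega),
    coeff_X_pow, if_neg (by omega)]
  have := (ZMod.intCast_zmod_eq_zero_iff_dvd ((Vq p).coeff j) p).mp (by
    rwa [show ((((Vq p).coeff j : ℤ)) : ZMod p) = (((Vq p).coeff j : ℤ) : ZMod p) from rfl])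
  simpa using this

end Frob

theorem qpd_main (H : ℤ → ℤ → ℤ)
    (h1 : ∀ x : ℤ, Odd x → 1 ≤ x →
      H x x = (-1) ^ ((x - 1) / 2).toNat ∧ H x (-x) = 0)
    (h2 : ∀ x : ℤ, Odd x → 3 ≤ x →
      H x (x - 2) = -((-1) ^ ((x - 1) / 2).toNat * (x - 1)) ∧
      H x (-x + 2) = (-1) ^ ((x - 1) / 2).toNat)
    (h3 : ∀ x y : ℤ, Odd x → Odd y → |y| ≤ x - 2 →
      4 * H x y = H (x + 2) y + H (x - 2) y + H x (y + 2) + H x (y - 2)) :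
    ∀ m : ℕ, ∀ i : ℕ, i ≤ 2*m+1 →
      2*(H (2*(m:ℤ)+1) ((2*(m:ℤ)+1) - 2*(i:ℤ)) - H (2*(m:ℤ)+1) (2*(i:ℤ) - (2*(m:ℤ)+1)))
        = (-1)^(m+i) * (Wq m).coeff i := by
  intro m
  induction m using Nat.strong_induction_on with
  | _ m ih =>
    rcases m with _|_|n
    · -- m = 0
      intro i hi
      interval_cases i
      · push_cast
        norm_num
        obtain ⟨c1, c2⟩ := h1 1 ⟨0, by ring⟩ le_rfl
        norm_num at c1
        rw [c1, c2, Wq_coeff_zero]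
        norm_num
      · push_cast
        norm_num
        obtain ⟨c1, c2⟩ := h1 1 ⟨0, by ring⟩ le_rfl
        norm_num at c1
        rw [c1, c2, Wq_coeff_one_zero]
        norm_num
    · -- m = 1
      intro i hi
      obtain ⟨c1, c2⟩ := h1 3 ⟨1, by ring⟩ (by norm_num)
      obtain ⟨d1, d2⟩ := h2 3 ⟨1, by ring⟩ (by norm_num)
      norm_num at c1 d1 d2
      have w0 := Wq_coeff_zero 1
      have w1 := Wq_coeff_one 1 le_rfl
      have w2 := Wq_coeff_subtop 1 le_rfl
      have w3 := Wq_coeff_top 1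
      norm_num at w1 w2 w3
      interval_cases i
      · push_cast; norm_num
        rw [c1, c2, w0]; norm_num
      · push_cast; norm_num
        rw [d1, d2, w1]; norm_num
      · push_cast; norm_num
        rw [d1, d2, w2]; norm_num
      · push_cast; norm_num
        rw [c1, c2, w3]; norm_num
    · -- m = n+2
      intro i hi
      obtain ⟨c1, c2⟩ := h1 (2*(n:ℤ)+5) ⟨(n:ℤ)+2, by ring⟩ (by omega)
      obtain ⟨d1, d2⟩ := h2 (2*(n:ℤ)+5) ⟨(n:ℤ)+2, by ring⟩ (by omega)
      have he : ((2*(n:ℤ)+5 - 1) / 2).toNat = n + 2 := by omega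
      rw [he] at c1 d1 d2
      rcases i with _|_|j
      · -- i = 0
        simp only [show n+1+1 = n+2 from rfl]
        push_cast
        rw [show (2*((n:ℤ)+2)+1 - 0) = 2*(n:ℤ)+5 from by ring,
            show ((0:ℤ) - (2*((n:ℤ)+2)+1)) = -(2*(n:ℤ)+5) from by ring,
            show (2*((n:ℤ)+2)+1) = 2*(n:ℤ)+5 from by ring,
            c1, c2, Wq_coeff_zero]
        ring
      · -- i = 1
        simp only [show n+1+1 = n+2 from rfl]
        push_cast
        rw [show (2*((n:ℤ)+2)+1 - 2) = 2*(n:ℤ)+5 - 2 from by ring,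
            show ((2:ℤ) - (2*((n:ℤ)+2)+1)) = -(2*(n:ℤ)+5) + 2 from by ring,
            show (2*((n:ℤ)+2)+1) = 2*(n:ℤ)+5 from by ring,
            d1, d2, Wq_coeff_one (n+2) (by omega)]
        push_cast
        ring
      · -- i = j+2
        rcases Nat.lt_or_ge j (2*n+2) with hj | hj
        · -- interior : j <= 2n+1
          have A1 := ih (n+1) (by omega) j (by omega)
          have A2 := ih (n+1) (by omega) (j+1) (by omega)
          have A3 := ih (n+1) (by omega) (j+2) (by omega)
          have B := ih n (by omega) j (by omega)
          have e1 := h3 (2*(n:ℤ)+3) (2*(n:ℤ)+1-2*(j:ℤ)) ⟨(n:ℤ)+1, by ring⟩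
            ⟨(n:ℤ)-(j:ℤ), by ring⟩ (by rw [abs_le]; constructor <;> omega)
          have e2 := h3 (2*(n:ℤ)+3) (-(2*(n:ℤ)+1-2*(j:ℤ))) ⟨(n:ℤ)+1, by ring⟩
            ⟨(j:ℤ)-(n:ℤ)-1, by ring⟩ (by rw [abs_le]; constructor <;> omega)
          have hc := Wq_MRC n j (by omega)
          push_cast at A1 A2 A3 B
          -- canonicalize e1
          rw [show (2*(n:ℤ)+1-2*(j:ℤ)+2) = 2*(n:ℤ)+3-2*(j:ℤ) from by ring,
              show (2*(n:ℤ)+1-2*(j:ℤ)-2) = 2*(n:ℤ)-1-2*(j:ℤ) from by ring,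
              show (2*(n:ℤ)+3+2) = 2*(n:ℤ)+5 from by ring,
              show (2*(n:ℤ)+3-2) = 2*(n:ℤ)+1 from by ring] at e1
          -- canonicalize e2
          rw [show (-(2*(n:ℤ)+1-2*(j:ℤ))+2) = -(2*(n:ℤ)-1-2*(j:ℤ)) from by ring,
              show (-(2*(n:ℤ)+1-2*(j:ℤ))-2) = -(2*(n:ℤ)+3-2*(j:ℤ)) from by ring,
              show (2*(n:ℤ)+3+2) = 2*(n:ℤ)+5 from by ring,
              show (2*(n:ℤ)+3-2) = 2*(n:ℤ)+1 from by ring] at e2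
          -- canonicalize A1
          rw [show (2*((n:ℤ)+1)+1 - 2*(j:ℤ)) = 2*(n:ℤ)+3-2*(j:ℤ) from by ring,
              show (2*(j:ℤ) - (2*((n:ℤ)+1)+1)) = -(2*(n:ℤ)+3-2*(j:ℤ)) from by ring,
              show (2*((n:ℤ)+1)+1) = 2*(n:ℤ)+3 from by ring] at A1
          -- canonicalize A2
          rw [show (2*((n:ℤ)+1)+1 - 2*((j:ℤ)+1)) = 2*(n:ℤ)+1-2*(j:ℤ) from by ring,
              show (2*((j:ℤ)+1) - (2*((n:ℤ)+1)+1)) = -(2*(n:ℤ)+1-2*(j:ℤ)) from by ring,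
              show (2*((n:ℤ)+1)+1) = 2*(n:ℤ)+3 from by ring] at A2
          -- canonicalize A3
          rw [show (2*((n:ℤ)+1)+1 - 2*((j:ℤ)+2)) = 2*(n:ℤ)-1-2*(j:ℤ) from by ring,
              show (2*((j:ℤ)+2) - (2*((n:ℤ)+1)+1)) = -(2*(n:ℤ)-1-2*(j:ℤ)) from by ring,
              show (2*((n:ℤ)+1)+1) = 2*(n:ℤ)+3 from by ring] at A3
          -- canonicalize B
          rw [show (2*(n:ℤ)+1 - 2*(j:ℤ)) = 2*(n:ℤ)+1-2*(j:ℤ) from by ring,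
              show (2*(j:ℤ) - (2*(n:ℤ)+1)) = -(2*(n:ℤ)+1-2*(j:ℤ)) from by ring] at B
          -- canonicalize goal
          simp only [show n+1+1 = n+2 from rfl, show j+1+1 = j+2 from rfl]
          push_cast
          rw [show (2*((n:ℤ)+2)+1 - 2*((j:ℤ)+2)) = 2*(n:ℤ)+1-2*(j:ℤ) from by ring,
              show (2*((j:ℤ)+2) - (2*((n:ℤ)+2)+1)) = -(2*(n:ℤ)+1-2*(j:ℤ)) from by ring,
              show (2*((n:ℤ)+2)+1) = 2*(n:ℤ)+5 from by ring]
          linear_combination (-2 : ℤ)*e1 + 2*e2 + 4*A2 - A1 - A3 - B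
            - ((-1:ℤ)^(n+j))*hc
        · -- j = 2n+2 or j = 2n+3
          have : j = 2*n+2 ∨ j = 2*n+3 := by omega
          rcases this with rfl | rfl
          · -- i = 2n+4 : subtop boundary
            simp only [show n+1+1 = n+2 from rfl, show 2*n+2+1+1 = 2*n+4 from by omega]
            push_cast
            have p2 : (-1:ℤ)^(n+2+(2*n+4)) = (-1)^(n+2) := by
              rw [show n+2+(2*n+4) = (n+2)+2*(n+2) from by omega, pow_add, pow_mul]
              norm_num
            rw [show (2*((n:ℤ)+2)+1 - 2*(2*(n:ℤ)+4)) = -(2*(n:ℤ)+5)+2 from by ring,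
                show (2*(2*(n:ℤ)+4) - (2*((n:ℤ)+2)+1)) = 2*(n:ℤ)+5-2 from by ring,
                show (2*((n:ℤ)+2)+1) = 2*(n:ℤ)+5 from by ring,
                d1, d2, p2,
                show 2*n+4 = 2*(n+2) from by omega,
                Wq_coeff_subtop (n+2) (by omega)]
            push_cast
            ring
          · -- i = 2n+5 : top boundary
            simp only [show n+1+1 = n+2 from rfl, show 2*n+3+1+1 = 2*n+5 from by omega]
            push_cast
            have p3 : (-1:ℤ)^(n+2+(2*n+5)) = (-1)^(n+2) * (-1) := by
              rw [show n+2+(2*n+5) = ((n+2)+2*(n+2))+1 from by omega, pow_succ,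
                pow_add, pow_mul]
              norm_num
            rw [show (2*((n:ℤ)+2)+1 - 2*(2*(n:ℤ)+5)) = -(2*(n:ℤ)+5) from by ring,
                show (2*(2*(n:ℤ)+5) - (2*((n:ℤ)+2)+1)) = 2*(n:ℤ)+5 from by ring,
                show (2*((n:ℤ)+2)+1) = 2*(n:ℤ)+5 from by ring,
                c1, c2, p3,
                show 2*n+5 = 2*(n+2)+1 from by omega,
                Wq_coeff_top (n+2)]
            ring


/-- Let `H` be the function on the quadrant
`Q = {(x,y) : x, y odd, 1 ≤ x, |y| ≤ x}` determined by the boundary conditions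
(i), (ii) and the harmonicity recursion (iii). If `(x,y) ∈ Q` with `|y| < x` and
`x` is prime, then `x` divides `H(x,y) − H(x,−y)`. -/
theorem quadrant_prime_divides (H : ℤ → ℤ → ℤ)
    (h1 : ∀ x : ℤ, Odd x → 1 ≤ x →
      H x x = (-1) ^ ((x - 1) / 2).toNat ∧ H x (-x) = 0)
    (h2 : ∀ x : ℤ, Odd x → 3 ≤ x →
      H x (x - 2) = -((-1) ^ ((x - 1) / 2).toNat * (x - 1)) ∧
      H x (-x + 2) = (-1) ^ ((x - 1) / 2).toNat)
    (h3 : ∀ x y : ℤ, Odd x → Odd y → |y| ≤ x - 2 →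
      4 * H x y = H (x + 2) y + H (x - 2) y + H x (y + 2) + H x (y - 2)) :
    ∀ x y : ℤ, Odd x → Odd y → 1 ≤ x → |y| < x → Prime x →
      x ∣ (H x y - H x (-y)) := by
  intro x y hxodd hyodd hx1 hyx hxp
  obtain ⟨a, ha⟩ := hxodd
  obtain ⟨b, hb⟩ := hyodd
  have hyx' : -x < y ∧ y < x := abs_lt.mp hyx
  have hx3 : 3 ≤ x := by
    rcases eq_or_ne x 1 with rfl | hne
    · exact absurd hxp not_prime_one
    · omega
  set p : ℕ := x.natAbs with hp
  have hxp' : x = (p : ℤ) := (Int.natAbs_of_nonneg (by omega)).symm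
  have hpn : p.Prime := Int.prime_iff_natAbs_prime.mp hxp
  haveI : Fact p.Prime := ⟨hpn⟩
  set m : ℕ := (p - 1) / 2 with hmdef
  have hm : 2 * m + 1 = p := by omega
  set i : ℕ := (a - b).toNat with hidef
  have hi : i ≤ 2 * m + 1 := by omega
  have E := qpd_main H h1 h2 h3 m i hi
  rw [show 2*(m:ℤ)+1 - 2*(i:ℤ) = y from by omega,
      show 2*(i:ℤ) - (2*(m:ℤ)+1) = -y from by omega,
      show 2*(m:ℤ)+1 = x from by omega] at E
  have hd : (x:ℤ) ∣ (Wq m).coeff i := by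
    rw [hxp']
    exact Wq_coeff_dvd p (by omega) i (by omega) (by omega) m hm
  have h2G : x ∣ 2 * (H x y - H x (-y)) := by
    rw [E]
    exact Dvd.dvd.mul_left hd _
  rcases (hxp.2.2 2 _ h2G) with h | h
  · exfalso
    have := Int.le_of_dvd (by norm_num) h
    omega
  · exact h
end
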